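/- Let (G_n) be a sequence of finite (q_n+1)-regular graphs on vertex sets V_n with |V_n| \to \infty, and suppose the normalized empirical spectral measures \mu_n (of q_n^{-1/2}A_n) converge to the semicircle law \mu_\infty in the p-Wasserstein distance for every p \in [1,\infty). Then q_n = |V_n|^{o(1)}, i.e. \log q_n / \log |V_n| \to 0. -/

import Mathlib

open MeasureTheory Filter
open scoped Real Classical

/-- The Wigner semicircle distribution: density `(1/(2π))√(4-x²)` on `[-2,2]`. -/
noncomputable def semicircle : Measure ℝ :=
  volume.withDensity fun x =>
    ENNReal.ofReal (if x ∈ Set.Icc (-2 : ℝ) 2 then (1 / (2 * π)) * Real.sqrt (4 - x ^ 2) else 0)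

/-- The `p`-Wasserstein distance between two measures on `ℝ`, defined as the infimum
over all couplings `γ` of `(∫ |x-y|^p dγ)^{1/p}`. -/
noncomputable def wassersteinDist (p : ℝ) (μ ν : Measure ℝ) : ℝ :=
  sInf {c : ℝ | ∃ γ : Measure (ℝ × ℝ), γ.map Prod.fst = μ ∧ γ.map Prod.snd = ν ∧
    c = (∫ z : ℝ × ℝ, |z.1 - z.2| ^ p ∂γ) ^ (1 / p)}

/-- The normalized empirical spectral distribution of a `(q+1)`-regular graph `G` on
`N` vertices: `(1/N) ∑_i δ_{q^{-1/2} λ_i}`, where `λ_i` are the adjacency eigenvalues. -/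
noncomputable def normalizedESD {N : ℕ} (G : SimpleGraph (Fin N)) (q : ℕ)
    (hA : ((G.adjMatrix ℝ)).IsHermitian) : Measure ℝ :=
  (N : ENNReal)⁻¹ • ∑ i : Fin N, Measure.dirac ((Real.sqrt q)⁻¹ * hA.eigenvalues i)


lemma conj_pow_unitary {n : Type*} [Fintype n] [DecidableEq n]
    (U : Matrix.unitaryGroup n ℝ) (D : Matrix n n ℝ) (k : ℕ) :
    ((U : Matrix n n ℝ) * D * star (U : Matrix n n ℝ)) ^ k
      = (U : Matrix n n ℝ) * D ^ k * star (U : Matrix n n ℝ) := by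
  have h1 : star (U : Matrix n n ℝ) * (U : Matrix n n ℝ) = 1 :=
    (Matrix.mem_unitaryGroup_iff').mp U.2
  have h1' : ∀ X : Matrix n n ℝ, star (U : Matrix n n ℝ) * ((U : Matrix n n ℝ) * X) = X := by
    intro X; rw [← Matrix.mul_assoc, h1, Matrix.one_mul]
  induction k with
  | zero => simp [Matrix.mul_assoc, (Matrix.mem_unitaryGroup_iff).mp U.2]
  | succ k ih =>
      rw [pow_succ, pow_succ, ih]
      simp only [Matrix.mul_assoc, h1']

lemma trace_pow_eq_sum {n : Type*} [Fintype n] [DecidableEq n] {A : Matrix n n ℝ}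
    (hA : A.IsHermitian) (k : ℕ) :
    (A ^ k).trace = ∑ i, hA.eigenvalues i ^ k := by
  conv_lhs => rw [hA.spectral_theorem]
  rw [Unitary.conjStarAlgAut_apply]
  rw [conj_pow_unitary, Matrix.trace_mul_cycle,
    (Matrix.mem_unitaryGroup_iff').mp hA.eigenvectorUnitary.2, Matrix.one_mul,
    Matrix.diagonal_pow, Matrix.trace_diagonal]
  simp

lemma rowsum_adj {V : Type*} [Fintype V] [DecidableEq V] {G : SimpleGraph V} {d : ℕ}
    (hd : G.IsRegularOfDegree d) (v : V) : ∑ u, (G.adjMatrix ℝ) v u = (d : ℝ) := by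
  have := hd v
  rw [SimpleGraph.degree] at this
  simp only [SimpleGraph.adjMatrix_apply, Finset.sum_boole]
  rw [show Finset.filter (fun x => G.Adj v x) Finset.univ = G.neighborFinset v by
    ext u; simp [SimpleGraph.mem_neighborFinset], this]

lemma rowsum_pow {V : Type*} [Fintype V] [DecidableEq V] {G : SimpleGraph V} {d : ℕ}
    (hd : G.IsRegularOfDegree d) (k : ℕ) (v : V) :
    ∑ u, (G.adjMatrix ℝ ^ k) v u = (d : ℝ) ^ k := by
  induction k generalizing v with
  | zero => simp [Matrix.one_apply]
  | succ k ih =>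
      rw [pow_succ']
      have : ∀ u, (G.adjMatrix ℝ * G.adjMatrix ℝ ^ k) v u
          = ∑ w, (G.adjMatrix ℝ) v w * (G.adjMatrix ℝ ^ k) w u := fun u => Matrix.mul_apply
      simp only [this]
      rw [Finset.sum_comm]
      simp only [← Finset.mul_sum, ih]
      rw [← Finset.sum_mul, rowsum_adj hd, pow_succ']

lemma trace_pow_lower {V : Type*} [Fintype V] [DecidableEq V] [Nonempty V] {G : SimpleGraph V}
    {d : ℕ} (hd : G.IsRegularOfDegree d) (hA : (G.adjMatrix ℝ).IsHermitian) (r : ℕ) :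
    (d : ℝ) ^ (2 * r) ≤ (G.adjMatrix ℝ ^ (2 * r)).trace := by
  set A := G.adjMatrix ℝ
  have hsym : ∀ u v, (A ^ r) u v = (A ^ r) v u := by
    intro u v
    have h := hA.pow r
    conv_lhs => rw [← h]
    simp [Matrix.conjTranspose_apply]
  have htr : (A ^ (2 * r)).trace = ∑ v, ∑ u, ((A ^ r) v u) ^ 2 := by
    rw [two_mul, pow_add, Matrix.trace]
    congr 1; ext v
    rw [Matrix.diag_apply, Matrix.mul_apply]
    congr 1; ext u
    rw [sq, hsym u v]
  have hcard : (0 : ℝ) < (Fintype.card V : ℝ) := by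
    exact_mod_cast Fintype.card_pos
  have key : ∀ v : V, ((d : ℝ) ^ r) ^ 2 ≤ (Fintype.card V : ℝ) * ∑ u, ((A ^ r) v u) ^ 2 := by
    intro v
    have := sq_sum_le_card_mul_sum_sq (s := (Finset.univ : Finset V)) (f := fun u => (A ^ r) v u)
    rw [rowsum_pow hd r v] at this
    simpa using this
  have : (Fintype.card V : ℝ) * (d : ℝ) ^ (2 * r)
      ≤ (Fintype.card V : ℝ) * (A ^ (2 * r)).trace := by
    rw [htr, Finset.mul_sum]
    calc (Fintype.card V : ℝ) * (d : ℝ) ^ (2 * r)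
        = ∑ _v : V, (d : ℝ) ^ (2 * r) := by
          rw [Finset.sum_const, nsmul_eq_mul, Finset.card_univ]
      _ ≤ _ := by
          apply Finset.sum_le_sum
          intro v _
          have := key v
          rwa [← pow_mul, mul_comm r 2] at this
  exact le_of_mul_le_mul_left this hcard


lemma esd_moment {N q : ℕ} (r : ℕ) (G : SimpleGraph (Fin N))
    (hA : ((G.adjMatrix ℝ)).IsHermitian) :
    ∫ x, x ^ (2 * r) ∂(normalizedESD G q hA)
      = (N : ℝ)⁻¹ * ∑ i, ((Real.sqrt q)⁻¹ * hA.eigenvalues i) ^ (2 * r) := by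
  rw [normalizedESD, integral_smul_measure, integral_finset_sum_measure]
  · simp only [integral_dirac]
    simp [ENNReal.toReal_inv]
  · intro i _
    exact (integrable_const _).congr (ae_eq_dirac (fun x : ℝ => x ^ (2 * r))).symm

lemma esd_moment_lower {N q : ℕ} (r : ℕ) (hq : 1 ≤ q) (hN : 0 < N)
    (G : SimpleGraph (Fin N)) (hreg : G.IsRegularOfDegree (q + 1))
    (hA : ((G.adjMatrix ℝ)).IsHermitian) :
    (q : ℝ) ^ r / N ≤ ∫ x, x ^ (2 * r) ∂(normalizedESD G q hA) := by
  have hq0 : (0 : ℝ) < (q : ℝ) := by exact_mod_cast hq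
  have hNe : Nonempty (Fin N) := Fin.pos_iff_nonempty.mp hN
  rw [esd_moment]
  have hsq : ((Real.sqrt q)⁻¹) ^ (2 * r) = ((q : ℝ) ^ r)⁻¹ := by
    rw [pow_mul, ← inv_pow, inv_pow, Real.sq_sqrt hq0.le, inv_pow]
  have hsum : ∑ i, ((Real.sqrt q)⁻¹ * hA.eigenvalues i) ^ (2 * r)
      = ((q : ℝ) ^ r)⁻¹ * (G.adjMatrix ℝ ^ (2 * r)).trace := by
    rw [trace_pow_eq_sum hA (2 * r), Finset.mul_sum]
    congr 1; ext i
    rw [mul_pow, hsq]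
  rw [hsum]
  have htr : ((q : ℕ) + 1 : ℝ) ^ (2 * r) ≤ (G.adjMatrix ℝ ^ (2 * r)).trace := by
    have := trace_pow_lower hreg hA r
    exact_mod_cast this
  have h2 : (q : ℝ) ^ (2 * r) ≤ (G.adjMatrix ℝ ^ (2 * r)).trace := by
    refine le_trans ?_ htr
    apply pow_le_pow_left₀ hq0.le
    linarith
  calc (q : ℝ) ^ r / N = (N : ℝ)⁻¹ * (((q : ℝ) ^ r)⁻¹ * (q : ℝ) ^ (2 * r)) := by
        rw [two_mul, pow_add]
        field_simp
    _ ≤ _ := by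
        apply mul_le_mul_of_nonneg_left _ (by positivity)
        apply mul_le_mul_of_nonneg_left h2 (by positivity)


lemma sqrt_four_integral : ∫ x in (-2 : ℝ)..2, Real.sqrt (4 - x ^ 2) = 2 * π := by
  have hfun : ∀ x : ℝ, Real.sqrt (4 - x ^ 2) = 2 * Real.sqrt (1 - (x / 2) ^ 2) := by
    intro x
    rw [show (4 : ℝ) - x ^ 2 = 4 * (1 - (x / 2) ^ 2) by ring, Real.sqrt_mul (by norm_num),
      show Real.sqrt 4 = 2 by rw [show (4:ℝ) = 2^2 by norm_num, Real.sqrt_sq (by norm_num)]]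
  simp_rw [hfun]
  rw [intervalIntegral.integral_const_mul]
  have := intervalIntegral.integral_comp_div (a := (-2:ℝ)) (b := 2) (c := 2)
    (f := fun u => Real.sqrt (1 - u ^ 2)) (by norm_num)
  rw [this]
  norm_num [integral_sqrt_one_sub_sq]
  ring

lemma semicircle_density_eq : (fun x : ℝ =>
    if x ∈ Set.Icc (-2 : ℝ) 2 then (1 / (2 * π)) * Real.sqrt (4 - x ^ 2) else 0)
    = (Set.Icc (-2 : ℝ) 2).indicator (fun x => (1 / (2 * π)) * Real.sqrt (4 - x ^ 2)) := by
  funext x; simp [Set.indicator_apply]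

lemma semicircle_density_cont : Continuous (fun x : ℝ => (1 / (2 * π)) * Real.sqrt (4 - x ^ 2)) :=
  continuous_const.mul ((continuous_const.sub (continuous_pow 2)).sqrt)

lemma semicircle_density_integrable : Integrable (fun x : ℝ =>
    if x ∈ Set.Icc (-2 : ℝ) 2 then (1 / (2 * π)) * Real.sqrt (4 - x ^ 2) else 0) := by
  rw [semicircle_density_eq]
  exact (semicircle_density_cont.integrableOn_Icc).integrable_indicator measurableSet_Icc

lemma semicircle_density_integral : ∫ x : ℝ, (if x ∈ Set.Icc (-2 : ℝ) 2
    then (1 / (2 * π)) * Real.sqrt (4 - x ^ 2) else 0) = 1 := by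
  rw [semicircle_density_eq, integral_indicator measurableSet_Icc,
    MeasureTheory.integral_Icc_eq_integral_Ioc,
    ← intervalIntegral.integral_of_le (by norm_num : (-2:ℝ) ≤ 2),
    intervalIntegral.integral_const_mul, sqrt_four_integral]
  field_simp

lemma semicircle_univ : semicircle Set.univ = 1 := by
  rw [semicircle, withDensity_apply _ MeasurableSet.univ, Measure.restrict_univ,
    ← ofReal_integral_eq_lintegral_ofReal semicircle_density_integrable]
  · rw [semicircle_density_integral]; norm_num
  · filter_upwards with x
    simp only [Pi.zero_apply]
    split <;> positivity

instance : IsProbabilityMeasure semicircle := ⟨semicircle_univ⟩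

lemma semicircle_ae_le : ∀ᵐ y ∂semicircle, |y| ≤ 2 := by
  rw [ae_iff]
  have hs : MeasurableSet {y : ℝ | ¬ |y| ≤ 2} :=
    (measurableSet_le (measurable_norm) measurable_const).compl
  rw [semicircle, withDensity_apply _ hs]
  rw [setLIntegral_congr_fun hs (g := fun _ => (0 : ENNReal))]
  · simp
  · intro y
    intro hy
    have hy' : ¬ |y| ≤ 2 := hy
    have hni : y ∉ Set.Icc (-2:ℝ) 2 := fun hmem => hy' (abs_le.mpr ⟨hmem.1, hmem.2⟩)
    simp [hni]


lemma moment_upper (r : ℕ) (hr : 1 ≤ r) (μ : Measure ℝ) [IsProbabilityMeasure μ]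
    (M : ℝ) (hM0 : 0 ≤ M) (hM : ∀ᵐ x ∂μ, |x| ≤ M)
    (hW : wassersteinDist ((2 * r : ℕ) : ℝ) μ semicircle < 1) :
    ∫ x, x ^ (2 * r) ∂μ ≤ 2 ^ (2 * r) * (1 + 2 ^ (2 * r)) := by
  set p : ℝ := ((2 * r : ℕ) : ℝ) with hp
  have hp1 : (1 : ℝ) ≤ p := by
    rw [hp]; exact_mod_cast Nat.one_le_iff_ne_zero.mpr (by positivity)
  have hp0 : 0 < p := lt_of_lt_of_le one_pos hp1
  -- the set of coupling costs
  set S := {c : ℝ | ∃ γ : Measure (ℝ × ℝ), γ.map Prod.fst = μ ∧ γ.map Prod.snd = semicircle ∧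
    c = (∫ z : ℝ × ℝ, |z.1 - z.2| ^ p ∂γ) ^ (1 / p)} with hS
  have hSne : S.Nonempty := by
    refine ⟨_, μ.prod semicircle, ?_, ?_, rfl⟩
    · simp [Measure.map_fst_prod]
    · simp [Measure.map_snd_prod]
  have hlt : sInf S < 1 := hW
  obtain ⟨c, ⟨γ, hfst, hsnd, hc⟩, hc1⟩ := exists_lt_of_csInf_lt hSne hlt
  -- basic facts about γ
  have hγuniv : γ Set.univ = 1 := by
    have : (γ.map Prod.fst) Set.univ = γ Set.univ := by
      rw [Measure.map_apply measurable_fst MeasurableSet.univ]; rfl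
    rw [hfst] at this
    rw [← this, measure_univ]
  haveI : IsProbabilityMeasure γ := ⟨hγuniv⟩
  have hae1 : ∀ᵐ z : ℝ × ℝ ∂γ, |z.1| ≤ M := by
    have := (ae_map_iff measurable_fst.aemeasurable
      (measurableSet_le measurable_norm measurable_const : MeasurableSet {x : ℝ | |x| ≤ M})).mp
      (by rw [hfst]; exact hM)
    exact this
  have hae2 : ∀ᵐ z : ℝ × ℝ ∂γ, |z.2| ≤ 2 := by
    have := (ae_map_iff measurable_snd.aemeasurable
      (measurableSet_le measurable_norm measurable_const : MeasurableSet {x : ℝ | |x| ≤ 2})).mp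
      (by rw [hsnd]; exact semicircle_ae_le)
    exact this
  -- the transport cost is at most 1
  have hInn : (0:ℝ) ≤ ∫ z : ℝ × ℝ, |z.1 - z.2| ^ p ∂γ :=
    integral_nonneg fun z => Real.rpow_nonneg (abs_nonneg _) _
  have hIle : ∫ z : ℝ × ℝ, |z.1 - z.2| ^ p ∂γ ≤ 1 := by
    by_contra h
    push_neg at h
    have : (1:ℝ) ≤ c := by
      rw [hc]
      calc (1:ℝ) = 1 ^ (1/p) := (Real.one_rpow _).symm
        _ ≤ _ := Real.rpow_le_rpow zero_le_one h.le (by positivity)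
    linarith
  -- rewrite rpow as pow
  have hIeq : ∫ z : ℝ × ℝ, |z.1 - z.2| ^ p ∂γ = ∫ z : ℝ × ℝ, |z.1 - z.2| ^ (2 * r) ∂γ := by
    congr 1; funext z; rw [hp, Real.rpow_natCast]
  -- integrability
  have hcont1 : Continuous fun z : ℝ × ℝ => |z.1 - z.2| ^ (2 * r) :=
    ((continuous_fst.sub continuous_snd).abs).pow _
  have hcont2 : Continuous fun z : ℝ × ℝ => |z.2| ^ (2 * r) :=
    (continuous_snd.abs).pow _
  have hint1 : Integrable (fun z : ℝ × ℝ => |z.1 - z.2| ^ (2 * r)) γ := by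
    refine Integrable.mono' (integrable_const ((M + 2) ^ (2 * r)))
      hcont1.aestronglyMeasurable ?_
    filter_upwards [hae1, hae2] with z h1 h2
    rw [Real.norm_eq_abs, abs_of_nonneg (by positivity)]
    exact pow_le_pow_left₀ (abs_nonneg _)
      ((abs_sub _ _).trans (by linarith)) _
  have hint2 : Integrable (fun z : ℝ × ℝ => |z.2| ^ (2 * r)) γ := by
    refine Integrable.mono' (integrable_const ((2:ℝ) ^ (2 * r)))
      hcont2.aestronglyMeasurable ?_
    filter_upwards [hae2] with z h2
    rw [Real.norm_eq_abs, abs_of_nonneg (by positivity)]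
    exact pow_le_pow_left₀ (abs_nonneg _) h2 _
  -- the second moment bound
  have hsnd_moment : ∫ z : ℝ × ℝ, |z.2| ^ (2 * r) ∂γ ≤ 2 ^ (2 * r) := by
    calc ∫ z : ℝ × ℝ, |z.2| ^ (2 * r) ∂γ ≤ ∫ _z : ℝ × ℝ, (2:ℝ) ^ (2 * r) ∂γ := by
          apply integral_mono_ae hint2 (integrable_const _)
          filter_upwards [hae2] with z h2
          exact pow_le_pow_left₀ (abs_nonneg _) h2 _
      _ = 2 ^ (2 * r) := by simp
  -- pointwise bound
  have hptwise : ∀ z : ℝ × ℝ, |z.1| ^ (2 * r)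
      ≤ 2 ^ (2 * r) * (|z.1 - z.2| ^ (2 * r) + |z.2| ^ (2 * r)) := by
    intro z
    set a := |z.1 - z.2|
    set b := |z.2|
    have hab : |z.1| ≤ a + b := by
      calc |z.1| = |(z.1 - z.2) + z.2| := by ring_nf
        _ ≤ a + b := abs_add_le _ _
    calc |z.1| ^ (2 * r) ≤ (a + b) ^ (2 * r) :=
          pow_le_pow_left₀ (abs_nonneg _) hab _
      _ ≤ 2 ^ (2 * r - 1) * (a ^ (2 * r) + b ^ (2 * r)) :=
          add_pow_le (abs_nonneg _) (abs_nonneg _) _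
      _ ≤ 2 ^ (2 * r) * (a ^ (2 * r) + b ^ (2 * r)) := by
          apply mul_le_mul_of_nonneg_right _ (by positivity)
          apply pow_le_pow_right₀ (by norm_num)
          omega
  -- put it together
  have hmap : ∫ x, x ^ (2 * r) ∂μ = ∫ z : ℝ × ℝ, z.1 ^ (2 * r) ∂γ := by
    rw [← hfst, integral_map measurable_fst.aemeasurable
      (continuous_pow (2 * r)).aestronglyMeasurable]
  have habs : ∀ x : ℝ, x ^ (2 * r) = |x| ^ (2 * r) := by
    intro x
    rw [pow_abs, abs_of_nonneg]
    rw [mul_comm, pow_mul]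
    positivity
  calc ∫ x, x ^ (2 * r) ∂μ = ∫ z : ℝ × ℝ, |z.1| ^ (2 * r) ∂γ := by
        rw [hmap]; congr 1; funext z; exact habs z.1
    _ ≤ ∫ z : ℝ × ℝ, 2 ^ (2 * r) * (|z.1 - z.2| ^ (2 * r) + |z.2| ^ (2 * r)) ∂γ := by
        apply integral_mono_of_nonneg
        · filter_upwards with z; positivity
        · exact (hint1.add hint2).const_mul _
        · filter_upwards with z; exact hptwise z
    _ = 2 ^ (2 * r) * ((∫ z : ℝ × ℝ, |z.1 - z.2| ^ (2 * r) ∂γ)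
          + ∫ z : ℝ × ℝ, |z.2| ^ (2 * r) ∂γ) := by
        rw [integral_const_mul, integral_add hint1 hint2]
    _ ≤ 2 ^ (2 * r) * (1 + 2 ^ (2 * r)) := by
        apply mul_le_mul_of_nonneg_left _ (by positivity)
        have := hIeq ▸ hIle
        exact add_le_add this hsnd_moment

lemma esd_prob {N q : ℕ} (hN : 0 < N) (G : SimpleGraph (Fin N))
    (hA : ((G.adjMatrix ℝ)).IsHermitian) :
    IsProbabilityMeasure (normalizedESD G q hA) := by
  constructor
  rw [normalizedESD, Measure.smul_apply]
  have : (∑ i : Fin N, Measure.dirac ((Real.sqrt q)⁻¹ * hA.eigenvalues i)) Set.univ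
      = ∑ i : Fin N, (1 : ENNReal) := by
    rw [Measure.finset_sum_apply]
    simp
  rw [this]
  simp only [Finset.sum_const, Finset.card_univ, Fintype.card_fin, nsmul_eq_mul, mul_one,
    smul_eq_mul]
  rw [ENNReal.inv_mul_cancel (by exact_mod_cast hN.ne') (by simp)]

lemma esd_ae_bound {N q : ℕ} (G : SimpleGraph (Fin N))
    (hA : ((G.adjMatrix ℝ)).IsHermitian) :
    ∀ᵐ x ∂(normalizedESD G q hA),
      |x| ≤ ∑ i : Fin N, |(Real.sqrt q)⁻¹ * hA.eigenvalues i| := by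
  set M := ∑ i : Fin N, |(Real.sqrt q)⁻¹ * hA.eigenvalues i| with hM
  rw [ae_iff]
  have hs : MeasurableSet {x : ℝ | ¬ |x| ≤ M} :=
    (measurableSet_le measurable_norm measurable_const).compl
  rw [normalizedESD, Measure.smul_apply, Measure.finset_sum_apply]
  have : ∀ i : Fin N,
      Measure.dirac ((Real.sqrt q)⁻¹ * hA.eigenvalues i) {x : ℝ | ¬ |x| ≤ M} = 0 := by
    intro i
    rw [Measure.dirac_apply' _ hs]
    have : |(Real.sqrt q)⁻¹ * hA.eigenvalues i| ≤ M := by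
      rw [hM]
      exact Finset.single_le_sum (f := fun j => |(Real.sqrt q)⁻¹ * hA.eigenvalues j|)
        (fun j _ => abs_nonneg _) (Finset.mem_univ i)
    simpa [Set.indicator_apply] using this
  simp only [this, Finset.sum_const_zero, smul_eq_mul, mul_zero]

theorem wasserstein_convergence_implies_subpolynomial_degree
    (N q : ℕ → ℕ) (G : ∀ n, SimpleGraph (Fin (N n)))
    (hreg : ∀ n, (G n).IsRegularOfDegree (q n + 1))
    (hA : ∀ n, (((G n).adjMatrix ℝ)).IsHermitian)
    (hN : Tendsto N atTop atTop)
    (hconv : ∀ p : ℝ, 1 ≤ p →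
      Tendsto (fun n => wassersteinDist p (normalizedESD (G n) (q n) (hA n)) semicircle)
        atTop (nhds 0)) :
    Tendsto (fun n => Real.log (q n) / Real.log (N n)) atTop (nhds 0) := by
  rw [NormedAddCommGroup.tendsto_nhds_zero]
  intro ε hε
  obtain ⟨m, hm⟩ := exists_nat_one_div_lt (half_pos hε)
  set r : ℕ := m + 1 with hrdef
  have hr1 : 1 ≤ r := Nat.le_add_left 1 m
  have hrpos : (0:ℝ) < r := by exact_mod_cast hr1
  have hrlt : (1:ℝ) / r < ε / 2 := by exact_mod_cast hm
  set C : ℝ := 2 ^ (2 * r) * (1 + 2 ^ (2 * r)) with hC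
  have hC1 : (1:ℝ) ≤ C := by
    have h : (1:ℝ) ≤ 2 ^ (2 * r) := one_le_pow₀ (by norm_num)
    rw [hC]; nlinarith
  set D : ℝ := Real.log C with hD
  have hD0 : 0 ≤ D := Real.log_nonneg hC1
  -- eventualities
  have hp1 : (1:ℝ) ≤ ((2 * r : ℕ) : ℝ) := by
    have : 1 ≤ 2 * r := by omega
    exact_mod_cast this
  have evW : ∀ᶠ n in atTop,
      wassersteinDist ((2 * r : ℕ) : ℝ) (normalizedESD (G n) (q n) (hA n)) semicircle < 1 :=
    (hconv _ hp1).eventually (gt_mem_nhds one_pos)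
  have hlogN : Tendsto (fun n => Real.log (N n)) atTop atTop :=
    Real.tendsto_log_atTop.comp (tendsto_natCast_atTop_atTop.comp hN)
  have evL : ∀ᶠ n in atTop, 2 * D / ε + 1 ≤ Real.log (N n) :=
    hlogN.eventually (eventually_ge_atTop _)
  have evN : ∀ᶠ n in atTop, 2 ≤ N n := hN.eventually (eventually_ge_atTop 2)
  filter_upwards [evW, evL, evN] with n hW hL hN2
  have hNpos : 0 < N n := by omega
  have hlogNpos : (0:ℝ) < Real.log (N n) := by
    apply Real.log_pos
    exact_mod_cast hN2
  by_cases hq : q n = 0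
  · simp [hq, hε]
  have hq1 : 1 ≤ q n := Nat.one_le_iff_ne_zero.mpr hq
  have hqR : (1:ℝ) ≤ (q n : ℝ) := by exact_mod_cast hq1
  -- moment sandwich
  haveI := esd_prob (q := q n) hNpos (G n) (hA n)
  have hlow := esd_moment_lower r hq1 hNpos (G n) (hreg n) (hA n)
  have hupp := moment_upper r hr1 (normalizedESD (G n) (q n) (hA n))
    (∑ i : Fin (N n), |(Real.sqrt (q n))⁻¹ * (hA n).eigenvalues i|)
    (Finset.sum_nonneg fun i _ => abs_nonneg _) (esd_ae_bound (G n) (hA n)) hW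
  have hkey : (q n : ℝ) ^ r ≤ (N n : ℝ) * C := by
    have h := hlow.trans hupp
    rw [div_le_iff₀ (by exact_mod_cast hNpos)] at h
    calc (q n : ℝ) ^ r ≤ C * N n := h
      _ = (N n : ℝ) * C := mul_comm _ _
  -- take logs
  have hlog : (r : ℝ) * Real.log (q n) ≤ Real.log (N n) + D := by
    have h1 : Real.log ((q n : ℝ) ^ r) ≤ Real.log ((N n : ℝ) * C) :=
      Real.log_le_log (by positivity) hkey
    rw [Real.log_pow, Real.log_mul (by positivity) (by positivity)] at h1
    exact_mod_cast h1
  have h3 : Real.log (q n) ≤ (Real.log (N n) + D) / r := by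
    rw [le_div_iff₀ hrpos]
    nlinarith [hlog]
  have h4 : (Real.log (N n) + D) / r ≤ Real.log (N n) / r + D := by
    rw [add_div]
    have := div_le_self hD0 (by exact_mod_cast hr1 : (1:ℝ) ≤ r)
    linarith
  have hfn : Real.log (q n) / Real.log (N n) ≤ 1 / r + D / Real.log (N n) := by
    rw [div_le_iff₀ hlogNpos]
    have expand : (1 / r + D / Real.log (N n)) * Real.log (N n)
        = Real.log (N n) / r + D := by
      field_simp
    rw [expand]
    linarith
  have hDL : D / Real.log (N n) ≤ ε / 2 := by
    have hεL : 2 * D + ε ≤ ε * Real.log (N n) := by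
      have := mul_le_mul_of_nonneg_left hL hε.le
      have heq : ε * (2 * D / ε + 1) = 2 * D + ε := by field_simp
      linarith [heq ▸ this]
    rw [div_le_iff₀ hlogNpos]
    nlinarith
  have hnonneg : 0 ≤ Real.log (q n) / Real.log (N n) :=
    div_nonneg (Real.log_natCast_nonneg _) hlogNpos.le
  rw [Real.norm_eq_abs, abs_of_nonneg hnonneg]
  calc Real.log (q n) / Real.log (N n) ≤ 1 / r + D / Real.log (N n) := hfn
    _ < ε / 2 + ε / 2 := by
        apply add_lt_add_of_lt_of_le hrlt hDL
    _ = ε := by ring
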